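/- In the weak-preference variable-population housing market model with the universal domain, for any profile of tie-breakers ▷, the mechanism TTC^▷ satisfies local unanimity, consistency, strategy-proofness, and non-bossiness. -/

import Mathlib

/- Weak-preference variable-population housing market model (Shapley–Scarf).
Agents and objects are identified: `I` is the grand finite set of agents and
object `i` (the endowment of agent `i`) is identified with `i`. A market is a
nonempty `I' : Finset I` with object set `O_{I'} = I'`. A weak preference of
agent `i` on `O_{I'}` is encoded as a relation `R : I → I → Prop` supported on
`I'` (`R a b` meaning "`a` is weakly preferred to `b`") that is complete and
transitive on `I'` and never treats the endowment `i` as indifferent to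
another object (the universal domain consists of all such relations, these
being exactly the restrictions to `O_{I'}` of the members of `𝒰_i`). An
economy in market `I'` is a profile `R : I → I → I → Prop` with `R i` the
preference of agent `i` (only the components of agents `i ∈ I'` matter). A
mechanism assigns to every economy an assignment `I → I` (an allocation being
a bijection of `I'` onto itself). -/

open Finset

variable {I : Type*} [DecidableEq I]

/-- `R` is an admissible weak preference of agent `i` on the objects
`O_{I'} = I'`: supported on `I'`, complete and transitive on `I'`, and the
endowment `i` is not indifferent to any other object. -/
def IsWeakPrefOn (I' : Finset I) (i : I) (R : I → I → Prop) : Prop :=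
  (∀ a b, R a b → a ∈ I' ∧ b ∈ I') ∧
  (∀ a ∈ I', ∀ b ∈ I', R a b ∨ R b a) ∧
  (∀ a b c, R a b → R b c → R a c) ∧
  (∀ o ∈ I', o ≠ i → ¬ (R o i ∧ R i o))

/-- The restriction of a preference to the objects `O_J = J`. -/
def restrW (J : Finset I) (R : I → I → Prop) : I → I → Prop :=
  fun a b => R a b ∧ a ∈ J ∧ b ∈ J

/-- The strict linear order obtained from the weak preference `R` by breaking
every indifference according to the tie-breaker `t` (`a` is preferred to `b`
iff `a ≻ b`, or `a ∼ b` and the tie-breaker favors `a`). -/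
def tieBreak (R : I → I → Prop) (t : LinearOrder I) : I → I → Prop :=
  fun a b => (R a b ∧ ¬ R b a) ∨ (R a b ∧ R b a ∧ t.lt b a)

/-- The maximal element of `S` under the strict relation `r`
(`d` is a junk default, used only if no maximal element exists). -/
noncomputable def bestIn (r : I → I → Prop) (S : Finset I) (d : I) : I :=
  letI := Classical.dec (∃ m ∈ S, ∀ x ∈ S, x ≠ m → r m x)
  if h : ∃ m ∈ S, ∀ x ∈ S, x ≠ m → r m x then h.choose else d

/-- The agents of `S` lying on a cycle of the pointing map `fun i => fav i S`. -/
def cyclicAgents (fav : I → Finset I → I) (S : Finset I) : Finset I :=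
  S.filter fun i => ∃ k ∈ Finset.range S.card, (fun j => fav j S)^[k + 1] i = i

lemma cyclicAgents_subset (fav : I → Finset I → I) (S : Finset I) :
    cyclicAgents fav S ⊆ S := Finset.filter_subset _ _

/-- The TTC procedure on the set `S` of remaining agents: every agent of `S`
lying on a pointing cycle receives the object owned by the agent he points to
and is removed; the procedure is then repeated on the remaining agents.
(Agents outside `S` keep their endowments; for pointing maps induced by
strict preferences a cycle always exists, so the `else` branch is never
reached.) -/
def TTCaux (fav : I → Finset I → I) (S : Finset I) : I → I :=
  if hC : (cyclicAgents fav S).Nonempty then fun i =>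
    if i ∈ cyclicAgents fav S then fav i S else TTCaux fav (S \ cyclicAgents fav S) i
  else id
termination_by S.card
decreasing_by
  exact Finset.card_lt_card (Finset.sdiff_ssubset (cyclicAgents_subset fav S) hC)

/-- `TTC^▷`: the Top Trading Cycles mechanism with fixed tie-breakers
`T = (▷_i)_{i ∈ I}`, applied in market `I'` to the transformed strict profile. -/
noncomputable def TTCtb (T : I → LinearOrder I) (I' : Finset I)
    (R : I → I → I → Prop) : I → I :=
  TTCaux (fun i S => bestIn (tieBreak (R i) (T i)) S i) I'

/-- Local unanimity (weak-preference version): in every economy, whenever a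
nonempty set `J` of agents admits a unanimously best suballocation `μ`
(a bijection of `J` onto `O_J = J` giving every member of `J` his *unique*
best object of `O_{I'}`), the mechanism implements `μ` on `J`. -/
def LocallyUnanimousW (ψ : Finset I → (I → I → I → Prop) → I → I) : Prop :=
  ∀ I' : Finset I, I'.Nonempty → ∀ R : I → I → I → Prop,
    (∀ i ∈ I', IsWeakPrefOn I' i (R i)) →
    ∀ J : Finset I, J ⊆ I' → J.Nonempty → ∀ μ : I → I, Set.BijOn μ ↑J ↑J →
      (∀ i ∈ J, ∀ o ∈ I', o ≠ μ i → R i (μ i) o ∧ ¬ R i o (μ i)) →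
      ∀ i ∈ J, ψ I' R i = μ i

/-- Consistency of a mechanism: if the agents of `I' ∖ J` are assigned exactly
the objects `O_{I' ∖ J}` and are removed, every remaining agent receives the
same object in the reduced economy on `J`. -/
def ConsistentW (ψ : Finset I → (I → I → I → Prop) → I → I) : Prop :=
  ∀ I' : Finset I, I'.Nonempty → ∀ R : I → I → I → Prop,
    (∀ i ∈ I', IsWeakPrefOn I' i (R i)) →
    ∀ J : Finset I, J ⊆ I' → J.Nonempty →
      (I' \ J).image (fun i => ψ I' R i) = I' \ J →
      ∀ i ∈ J, ψ J (fun j => restrW J (R j)) i = ψ I' R i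

/-- Strategy-proofness (weak-preference version): no agent can obtain a
strictly better object by misreporting. -/
def StrategyProofW (ψ : Finset I → (I → I → I → Prop) → I → I) : Prop :=
  ∀ I' : Finset I, I'.Nonempty → ∀ R : I → I → I → Prop,
    (∀ i ∈ I', IsWeakPrefOn I' i (R i)) →
    ∀ i ∈ I', ∀ R' : I → I → Prop, IsWeakPrefOn I' i R' →
      ¬ (R i (ψ I' (Function.update R i R') i) (ψ I' R i) ∧
         ¬ R i (ψ I' R i) (ψ I' (Function.update R i R') i))

/-- Non-bossiness: no agent can change the allocation without changing his own
assignment. -/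
def NonBossyW (ψ : Finset I → (I → I → I → Prop) → I → I) : Prop :=
  ∀ I' : Finset I, I'.Nonempty → ∀ R : I → I → I → Prop,
    (∀ i ∈ I', IsWeakPrefOn I' i (R i)) →
    ∀ i ∈ I', ∀ R' : I → I → Prop, IsWeakPrefOn I' i R' →
      ψ I' (Function.update R i R') i = ψ I' R i →
      ∀ j ∈ I', ψ I' (Function.update R i R') j = ψ I' R j

section Helpers

variable {I : Type*} [DecidableEq I]

lemma iterate_mem' {f : I → I} {S : Finset I} (hf : ∀ j ∈ S, f j ∈ S) {x : I}
    (hx : x ∈ S) (n : ℕ) : f^[n] x ∈ S := by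
  induction n with
  | zero => simpa
  | succ n ih => rw [Function.iterate_succ_apply']; exact hf _ ih

lemma iterate_congr' {f g : I → I} {S : Finset I} (hf : ∀ j ∈ S, f j ∈ S)
    (h : ∀ j ∈ S, f j = g j) {x : I} (hx : x ∈ S) (n : ℕ) : f^[n] x = g^[n] x := by
  induction n with
  | zero => rfl
  | succ n ih =>
    rw [Function.iterate_succ_apply', Function.iterate_succ_apply', ← ih,
      h _ (iterate_mem' hf hx n)]

lemma iterate_fixed_mul {f : I → I} {x : I} {p : ℕ} (h : f^[p] x = x) (m : ℕ) :
    f^[p * m] x = x := by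
  rw [Function.iterate_mul]
  exact Function.iterate_fixed h m

lemma TTCaux_eq' (fav : I → Finset I → I) (S : Finset I) (x : I) :
    TTCaux fav S x = if (cyclicAgents fav S).Nonempty then
      (if x ∈ cyclicAgents fav S then fav x S else TTCaux fav (S \ cyclicAgents fav S) x)
    else x := by
  rw [TTCaux]
  split <;> simp_all

lemma mem_cyclicAgents' {fav : I → Finset I → I} {S : Finset I} {i : I} :
    i ∈ cyclicAgents fav S ↔ i ∈ S ∧ ∃ k, k < S.card ∧ (fun j => fav j S)^[k+1] i = i := by
  simp [cyclicAgents, Finset.mem_filter, Finset.mem_range]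

end Helpers
section Cycles

variable {I : Type*} [DecidableEq I]

/-- Period normalization: any positive period yields membership in `cyclicAgents`. -/
lemma mem_cyclicAgents_of_period {fav : I → Finset I → I} {S : Finset I} {i : I}
    (hstep : ∀ j ∈ S, fav j S ∈ S) (hi : i ∈ S) {p : ℕ} (hp : 0 < p)
    (hper : (fun j => fav j S)^[p] i = i) : i ∈ cyclicAgents fav S := by
  set f := fun j => fav j S with hf
  have hP : ∃ n, 0 < n ∧ f^[n] i = i := ⟨p, hp, hper⟩
  classical
  set p' := Nat.find hP with hp'
  obtain ⟨hp'pos, hp'per⟩ := Nat.find_spec hP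
  -- the orbit map on `range p'` is injective
  have key : ∀ a b : ℕ, a < b → b < p' → f^[a] i = f^[b] i → False := by
    intro a b h hb hab
    have h1 : f^[p' - b + a] i = i := by
      have h2 : f^[p' - b] (f^[b] i) = i := by
        rw [← Function.iterate_add_apply]
        have h3 : p' - b + b = p' := by omega
        rw [h3, hp'per]
      rw [← hab, ← Function.iterate_add_apply] at h2
      exact h2
    have : p' ≤ p' - b + a := Nat.find_le ⟨by omega, h1⟩
    omega
  have hinj : Set.InjOn (fun k => f^[k] i) ↑(Finset.range p') := by
    intro a ha b hb hab
    simp only [Finset.coe_range, Set.mem_Iio] at ha hb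
    have hab' : f^[a] i = f^[b] i := hab
    by_contra hne
    rcases Ne.lt_or_gt hne with h | h
    · exact key a b h hb hab'
    · exact key b a h ha hab'.symm
  have hmaps : ∀ k ∈ Finset.range p', f^[k] i ∈ S := fun k _ => iterate_mem' hstep hi k
  have hcard : p' ≤ S.card := by
    have := Finset.card_le_card_of_injOn (fun k => f^[k] i) hmaps hinj
    simpa using this
  rw [mem_cyclicAgents']
  refine ⟨hi, p' - 1, by omega, ?_⟩
  have : p' - 1 + 1 = p' := by omega
  rw [this]
  exact hp'per

lemma iterate_mem_cyclicAgents {fav : I → Finset I → I} {S : Finset I}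
    (hstep : ∀ j ∈ S, fav j S ∈ S) {i : I} (hi : i ∈ cyclicAgents fav S) (n : ℕ) :
    (fun j => fav j S)^[n] i ∈ cyclicAgents fav S := by
  set f := fun j => fav j S with hf
  rw [mem_cyclicAgents'] at hi ⊢
  obtain ⟨hiS, k, hk, hper⟩ := hi
  refine ⟨iterate_mem' hstep hiS n, k, hk, ?_⟩
  rw [← Function.iterate_add_apply, Nat.add_comm, Function.iterate_add_apply, hper]

lemma cyclicAgents_closed {fav : I → Finset I → I} {S : Finset I}
    (hstep : ∀ j ∈ S, fav j S ∈ S) {i : I} (hi : i ∈ cyclicAgents fav S) :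
    fav i S ∈ cyclicAgents fav S :=
  iterate_mem_cyclicAgents hstep hi 1

lemma cyclicAgents_nonempty {fav : I → Finset I → I} {S : Finset I}
    (hstep : ∀ j ∈ S, fav j S ∈ S) (hS : S.Nonempty) :
    (cyclicAgents fav S).Nonempty := by
  obtain ⟨x₀, hx₀⟩ := hS
  set f := fun j => fav j S with hf
  have hmaps : ∀ k ∈ Finset.range (S.card + 1), f^[k] x₀ ∈ S :=
    fun k _ => iterate_mem' hstep hx₀ k
  obtain ⟨a, ha, b, hb, hne, heq⟩ :=
    Finset.exists_ne_map_eq_of_card_lt_of_maps_to (by simp) hmaps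
  have key : ∀ a b : ℕ, a < b → f^[a] x₀ = f^[b] x₀ → (cyclicAgents fav S).Nonempty := by
    intro a b h heq
    refine ⟨f^[a] x₀, mem_cyclicAgents_of_period hstep (iterate_mem' hstep hx₀ a)
      (p := b - a) (by omega) ?_⟩
    rw [← Function.iterate_add_apply]
    have h2 : b - a + a = b := by omega
    rw [h2, ← heq]
  rcases Ne.lt_or_gt hne with h | h
  · exact key a b h heq
  · exact key b a h heq.symm

end Cycles
section TTCbasic

variable {I : Type*} [DecidableEq I]

lemma TTCaux_not_mem (fav : I → Finset I → I) :
    ∀ S : Finset I, ∀ x ∉ S, TTCaux fav S x = x := by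
  intro S
  induction S using Finset.strongInduction with
  | _ S ih =>
    intro x hx
    rw [TTCaux_eq']
    split
    · next hC =>
      rw [if_neg (fun h => hx (cyclicAgents_subset fav S h))]
      exact ih _ (Finset.sdiff_ssubset (cyclicAgents_subset fav S) hC) x
        (fun h => hx (Finset.sdiff_subset h))
    · rfl

lemma TTCaux_mem {fav : I → Finset I → I} (hstep : ∀ S : Finset I, ∀ j ∈ S, fav j S ∈ S) :
    ∀ S : Finset I, ∀ x ∈ S, TTCaux fav S x ∈ S := by
  intro S
  induction S using Finset.strongInduction with
  | _ S ih =>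
    intro x hx
    rw [TTCaux_eq']
    split
    · next hC =>
      split
      · next hxc => exact hstep S x hx
      · next hxc =>
        exact Finset.sdiff_subset
          (ih _ (Finset.sdiff_ssubset (cyclicAgents_subset fav S) hC) x
            (Finset.mem_sdiff.mpr ⟨hx, hxc⟩))
    · exact hx

/-- Independence of the pointing map: the best of a subset containing the best
of a superset is that same element. -/
def FavInd (fav : I → Finset I → I) (W : Finset I) : Prop :=
  ∀ j ∈ W, ∀ A B : Finset I, A ⊆ B → B ⊆ W → fav j B ∈ A → fav j A = fav j B

/-- A cycle whose orbit lies in a smaller set persists there, with the same pointers. -/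
lemma orbit_transfer {fav : I → Finset I → I} {W S S' : Finset I}
    (hstep : ∀ U : Finset I, ∀ j ∈ U, fav j U ∈ U) (hind : FavInd fav W)
    (hS : S ⊆ W) (hS' : S' ⊆ S) {x : I} (hx : x ∈ cyclicAgents fav S)
    (horb : ∀ n : ℕ, (fun j => fav j S)^[n] x ∈ S') :
    x ∈ cyclicAgents fav S' ∧ fav x S' = fav x S := by
  set f := fun j => fav j S with hf
  have hptr : ∀ n : ℕ, fav (f^[n] x) S' = fav (f^[n] x) S := by
    intro n
    refine hind _ (hS (hS' (horb n))) S' S hS' hS ?_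
    have : fav (f^[n] x) S = f^[n+1] x := by
      rw [Function.iterate_succ_apply']
    rw [this]
    exact horb (n + 1)
  have hit : ∀ n : ℕ, (fun j => fav j S')^[n] x = f^[n] x := by
    intro n
    induction n with
    | zero => rfl
    | succ n ihn =>
      rw [Function.iterate_succ_apply', Function.iterate_succ_apply', ihn, hptr n]
  rw [mem_cyclicAgents'] at hx
  obtain ⟨hxS, k, hk, hper⟩ := hx
  constructor
  · refine mem_cyclicAgents_of_period (hstep S') (horb 0) (p := k + 1) (by omega) ?_
    rw [hit (k + 1)]
    exact hper
  · exact hptr 0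

end TTCbasic
section Split

variable {I : Type*} [DecidableEq I]

/-- Orbits of cyclic agents outside a closed set `D` avoid `D`. -/
lemma orbit_avoids {fav : I → Finset I → I} {S D : Finset I}
    (hstep : ∀ j ∈ S, fav j S ∈ S) (hD : ∀ x ∈ D, fav x S ∈ D)
    {x : I} (hx : x ∈ cyclicAgents fav S) (hxD : x ∉ D) (n : ℕ) :
    (fun j => fav j S)^[n] x ∉ D := by
  set f := fun j => fav j S with hf
  intro hmem
  -- then x, lying on the forward orbit of `f^[n] x`, would be in `D`
  rw [mem_cyclicAgents'] at hx
  obtain ⟨hxS, k, hk, hper⟩ := hx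
  have hDclosed : ∀ m : ℕ, ∀ y ∈ D, f^[m] y ∈ D := by
    intro m
    induction m with
    | zero => intro y hy; simpa
    | succ m ihm =>
      intro y hy
      rw [Function.iterate_succ_apply']
      exact hD _ (ihm y hy)
  have hret : f^[(k+1) * (n+1) - n] (f^[n] x) = x := by
    rw [← Function.iterate_add_apply]
    have h2 : (k+1) * (n+1) - n + n = (k+1) * (n+1) := by nlinarith [Nat.sub_add_cancel (show n ≤ (k+1)*(n+1) by nlinarith)]
    rw [h2]
    exact iterate_fixed_mul hper (n+1)
  exact hxD (hret ▸ hDclosed _ _ hmem)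

/-- **Removal confluence**: any closed subfamily of current cycles may be
removed first without changing the outcome. -/
lemma TTCaux_split {fav : I → Finset I → I} {W : Finset I}
    (hstep : ∀ U : Finset I, ∀ j ∈ U, fav j U ∈ U) (hind : FavInd fav W) :
    ∀ S : Finset I, S ⊆ W → ∀ D : Finset I, D ⊆ cyclicAgents fav S →
      (∀ x ∈ D, fav x S ∈ D) → ∀ x : I,
      TTCaux fav S x = if x ∈ D then fav x S else TTCaux fav (S \ D) x := by
  intro S
  induction S using Finset.strongInduction with
  | _ S ih =>
    intro hSW D hDcyc hDcl x
    by_cases hDne : D.Nonempty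
    · have hA : (cyclicAgents fav S).Nonempty := hDne.mono hDcyc
      set A := cyclicAgents fav S with hAdef
      -- cyclic agents outside D stay cyclic in S \ D with same pointer
      have htrans : ∀ y ∈ A, y ∉ D → y ∈ cyclicAgents fav (S \ D) ∧ fav y (S \ D) = fav y S := by
        intro y hy hyD
        refine orbit_transfer hstep hind hSW Finset.sdiff_subset hy ?_
        intro n
        exact Finset.mem_sdiff.mpr ⟨iterate_mem' (hstep S) (cyclicAgents_subset fav S hy) n,
          orbit_avoids (hstep S) hDcl hy hyD n⟩
      rw [TTCaux_eq', if_pos hA]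
      by_cases hxD : x ∈ D
      · rw [if_pos (hDcyc hxD), if_pos hxD]
      · rw [if_neg hxD]
        by_cases hxA : x ∈ A
        · -- x cyclic in S \ D, pointer unchanged
          obtain ⟨hmem, hptr⟩ := htrans x hxA hxD
          rw [if_pos hxA, TTCaux_eq', if_pos ⟨x, hmem⟩, if_pos hmem, hptr]
        · rw [if_neg hxA]
          -- apply IH to S \ D with removal set A \ D
          have hsub : S \ D ⊂ S := Finset.sdiff_ssubset (hDcyc.trans (cyclicAgents_subset fav S)) hDne
          have h1 : A \ D ⊆ cyclicAgents fav (S \ D) := by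
            intro y hy
            rw [Finset.mem_sdiff] at hy
            exact (htrans y hy.1 hy.2).1
          have h2 : ∀ y ∈ A \ D, fav y (S \ D) ∈ A \ D := by
            intro y hy
            rw [Finset.mem_sdiff] at hy
            rw [(htrans y hy.1 hy.2).2]
            exact Finset.mem_sdiff.mpr ⟨cyclicAgents_closed (hstep S) hy.1,
              orbit_avoids (hstep S) hDcl hy.1 hy.2 1⟩
          have := ih (S \ D) hsub (Finset.sdiff_subset.trans hSW) (A \ D) h1 h2 x
          rw [this, if_neg (fun h => hxA (Finset.mem_sdiff.mp h).1)]
          have hda : ∀ y, y ∈ D → y ∈ A := fun y h => hDcyc h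
          have hset : (S \ D) \ (A \ D) = S \ A := by
            ext y
            simp only [Finset.mem_sdiff]
            have := hda y
            tauto
          rw [hset]
    · rw [Finset.not_nonempty_iff_eq_empty] at hDne
      subst hDne
      simp

end Split
section Congr

variable {I : Type*} [DecidableEq I]

lemma cyclicAgents_congr {fav fav' : I → Finset I → I} {S : Finset I}
    (hstep : ∀ j ∈ S, fav j S ∈ S) (h : ∀ j ∈ S, fav j S = fav' j S) :
    cyclicAgents fav S = cyclicAgents fav' S := by
  ext i
  rw [mem_cyclicAgents', mem_cyclicAgents']
  constructor
  · rintro ⟨hi, k, hk, hper⟩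
    exact ⟨hi, k, hk, by rw [← iterate_congr' hstep h hi (k+1)]; exact hper⟩
  · rintro ⟨hi, k, hk, hper⟩
    exact ⟨hi, k, hk, by rw [iterate_congr' hstep h hi (k+1)]; exact hper⟩

lemma TTCaux_congr {fav fav' : I → Finset I → I}
    (hstep : ∀ U : Finset I, ∀ j ∈ U, fav j U ∈ U) :
    ∀ S : Finset I, (∀ j ∈ S, ∀ U ⊆ S, fav j U = fav' j U) →
      ∀ x : I, TTCaux fav S x = TTCaux fav' S x := by
  intro S
  induction S using Finset.strongInduction with
  | _ S ih =>
    intro hag x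
    have hagS : ∀ j ∈ S, fav j S = fav' j S := fun j hj => hag j hj S (le_refl S)
    have hcyc : cyclicAgents fav S = cyclicAgents fav' S :=
      cyclicAgents_congr (hstep S) hagS
    rw [TTCaux_eq' fav S x, TTCaux_eq' fav' S x, ← hcyc]
    by_cases hA : (cyclicAgents fav S).Nonempty
    · rw [if_pos hA, if_pos hA]
      by_cases hx : x ∈ cyclicAgents fav S
      · rw [if_pos hx, if_pos hx]
        exact hagS x (cyclicAgents_subset fav S hx)
      · rw [if_neg hx, if_neg hx]
        refine ih _ (Finset.sdiff_ssubset (cyclicAgents_subset fav S) hA) ?_ x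
        intro j hj U hU
        exact hag j (Finset.sdiff_subset hj) U (hU.trans Finset.sdiff_subset)
    · rw [if_neg hA, if_neg hA]

end Congr

section Opportunity

variable {I : Type*} [DecidableEq I]

/-- **Opportunity-set lemma**: agent `i`'s TTC outcome is weakly better than any
object whose pointing path reaches `i`. -/
lemma TTCaux_opportunity {fav : I → Finset I → I} {W : Finset I}
    (hstep : ∀ U : Finset I, ∀ j ∈ U, fav j U ∈ U) (hind : FavInd fav W)
    (r : I → I → Prop) (i : I)
    (hmax : ∀ S : Finset I, S ⊆ W → ∀ x ∈ S, x ≠ fav i S → r (fav i S) x) :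
    ∀ S : Finset I, S ⊆ W → i ∈ S → ∀ b ∈ S, (∃ k, (fun j => fav j S)^[k] b = i) →
      TTCaux fav S i = b ∨ r (TTCaux fav S i) b := by
  intro S
  induction S using Finset.strongInduction with
  | _ S ih =>
    intro hSW hiS b hbS hpath
    set f := fun j => fav j S with hf
    obtain ⟨k, hk⟩ := hpath
    have hA : (cyclicAgents fav S).Nonempty := cyclicAgents_nonempty (hstep S) ⟨i, hiS⟩
    set A := cyclicAgents fav S with hAdef
    rw [TTCaux_eq', if_pos hA]
    by_cases hiA : i ∈ A
    · rw [if_pos hiA]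
      by_cases hbi : b = fav i S
      · exact Or.inl hbi.symm
      · exact Or.inr (hmax S hSW b hbS (hbi))
    · rw [if_neg hiA]
      -- the path avoids A
      have hav : ∀ m, m ≤ k → f^[m] b ∉ A := by
        intro m hm hmem
        apply hiA
        have : f^[k - m] (f^[m] b) = i := by
          rw [← Function.iterate_add_apply]
          have h2 : k - m + m = k := by omega
          rw [h2]; exact hk
        rw [hAdef, ← this]
        exact iterate_mem_cyclicAgents (hstep S) hmem (k - m)
      have hmemS : ∀ m, f^[m] b ∈ S := fun m => iterate_mem' (hstep S) hbS m
      have hmemSA : ∀ m, m ≤ k → f^[m] b ∈ S \ A :=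
        fun m hm => Finset.mem_sdiff.mpr ⟨hmemS m, hav m hm⟩
      -- transfer the path to S \ A
      have hpath' : ∀ m, m ≤ k → (fun j => fav j (S \ A))^[m] b = f^[m] b := by
        intro m hm
        induction m with
        | zero => rfl
        | succ m ihm =>
          rw [Function.iterate_succ_apply', Function.iterate_succ_apply',
            ihm (by omega)]
          refine hind _ (hSW (hmemS m)) (S \ A) S Finset.sdiff_subset hSW ?_
          have : fav (f^[m] b) S = f^[m+1] b := by rw [Function.iterate_succ_apply']
          rw [this]
          exact hmemSA (m+1) hm
      refine ih (S \ A) (Finset.sdiff_ssubset (cyclicAgents_subset fav S) hA)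
        (Finset.sdiff_subset.trans hSW) (Finset.mem_sdiff.mpr ⟨hiS, hiA⟩)
        b (hmemSA 0 (by omega)) ⟨k, ?_⟩
      rw [hpath' k (le_refl k)]
      exact hk
end Opportunity
section SPNB

variable {I : Type*} [DecidableEq I]

lemma path_transfer {fav fav' : I → Finset I → I} {S : Finset I} {i : I}
    (hagree : ∀ j, j ≠ i → ∀ U : Finset I, fav' j U = fav j U) :
    ∀ k : ℕ, ∀ b : I, (fun j => fav' j S)^[k] b = i →
      ∃ k', (fun j => fav j S)^[k'] b = i := by
  intro k
  induction k with
  | zero => intro b hb; exact ⟨0, hb⟩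
  | succ k ihk =>
    intro b hb
    by_cases hbi : b = i
    · exact ⟨0, hbi⟩
    · rw [Function.iterate_succ_apply] at hb
      obtain ⟨k', hk'⟩ := ihk _ hb
      refine ⟨k' + 1, ?_⟩
      rw [Function.iterate_succ_apply]
      show (fun j => fav j S)^[k'] (fav b S) = i
      rw [← hagree b hbi S]
      exact hk'

/-- If `i` is not `fav'`-cyclic, then every `fav'`-cyclic agent is `fav`-cyclic,
with the same pointer, and the `fav'`-cyclic set is closed under that pointer. -/
lemma cyclic_compare {fav fav' : I → Finset I → I} {S : Finset I} {i : I}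
    (hstep : ∀ U : Finset I, ∀ j ∈ U, fav j U ∈ U)
    (hstep' : ∀ U : Finset I, ∀ j ∈ U, fav' j U ∈ U)
    (hagree : ∀ j, j ≠ i → ∀ U : Finset I, fav' j U = fav j U)
    (hi : i ∉ cyclicAgents fav' S) :
    ∀ x ∈ cyclicAgents fav' S, x ∈ cyclicAgents fav S ∧ fav x S = fav' x S := by
  intro x hx
  set f := fun j => fav j S with hf
  set f' := fun j => fav' j S with hf'
  have horb_ne : ∀ m : ℕ, f'^[m] x ≠ i := by
    intro m hm
    exact hi (hm ▸ iterate_mem_cyclicAgents (hstep' S) hx m)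
  have hit : ∀ m : ℕ, f^[m] x = f'^[m] x := by
    intro m
    induction m with
    | zero => rfl
    | succ m ihm =>
      rw [Function.iterate_succ_apply', Function.iterate_succ_apply', ihm]
      show fav (f'^[m] x) S = fav' (f'^[m] x) S
      exact (hagree _ (horb_ne m) S).symm
  rw [mem_cyclicAgents'] at hx
  obtain ⟨hxS, k, hk, hper⟩ := hx
  have hxi : x ≠ i := horb_ne 0
  constructor
  · refine mem_cyclicAgents_of_period (hstep S) hxS (p := k + 1) (by omega) ?_
    rw [hit (k+1)]
    exact hper
  · exact (hagree x hxi S).symm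

/-- **Strategy-proofness, TTC run level.** -/
lemma TTCaux_sp {fav fav' : I → Finset I → I} {W : Finset I}
    (hstep : ∀ U : Finset I, ∀ j ∈ U, fav j U ∈ U)
    (hstep' : ∀ U : Finset I, ∀ j ∈ U, fav' j U ∈ U)
    (hind : FavInd fav W) {i : I}
    (hagree : ∀ j, j ≠ i → ∀ U : Finset I, fav' j U = fav j U)
    (r : I → I → Prop)
    (hmax : ∀ S : Finset I, S ⊆ W → ∀ x ∈ S, x ≠ fav i S → r (fav i S) x) :
    ∀ S : Finset I, S ⊆ W → i ∈ S →
      TTCaux fav S i = TTCaux fav' S i ∨ r (TTCaux fav S i) (TTCaux fav' S i) := by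
  intro S
  induction S using Finset.strongInduction with
  | _ S ih =>
    intro hSW hiS
    have hA' : (cyclicAgents fav' S).Nonempty := cyclicAgents_nonempty (hstep' S) ⟨i, hiS⟩
    by_cases hiA' : i ∈ cyclicAgents fav' S
    · -- i trades now under fav'; his object has a fav-path to i
      have hb : TTCaux fav' S i = fav' i S := by
        rw [TTCaux_eq', if_pos hA', if_pos hiA']
      rw [hb]
      obtain ⟨hiS', k, hk, hper⟩ := mem_cyclicAgents'.mp hiA'
      have hpath' : (fun j => fav' j S)^[k] (fav' i S) = i := by
        rw [← Function.iterate_succ_apply]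
        exact hper
      obtain ⟨k', hk'⟩ := path_transfer hagree k (fav' i S) hpath'
      exact TTCaux_opportunity hstep hind r i hmax S hSW hiS (fav' i S)
        (hstep' S i hiS) ⟨k', hk'⟩
    · -- remove the fav'-cycles (which are also fav-cycles) and recurse
      set A' := cyclicAgents fav' S with hA'def
      have hcomp := cyclic_compare hstep hstep' hagree hiA'
      have hD1 : A' ⊆ cyclicAgents fav S := fun x hx => (hcomp x hx).1
      have hD2 : ∀ x ∈ A', fav x S ∈ A' := by
        intro x hx
        rw [(hcomp x hx).2]
        exact cyclicAgents_closed (hstep' S) hx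
      have hL : TTCaux fav S i = TTCaux fav (S \ A') i := by
        rw [TTCaux_split hstep hind S hSW A' hD1 hD2 i, if_neg hiA']
      have hR : TTCaux fav' S i = TTCaux fav' (S \ A') i := by
        rw [TTCaux_eq', if_pos hA', if_neg hiA']
      rw [hL, hR]
      exact ih (S \ A') (Finset.sdiff_ssubset (cyclicAgents_subset fav' S) hA')
        (Finset.sdiff_subset.trans hSW) (Finset.mem_sdiff.mpr ⟨hiS, hiA'⟩)

end SPNB
section NB

variable {I : Type*} [DecidableEq I]

/-- **Non-bossiness, TTC run level.** -/
lemma TTCaux_nb {fav fav' : I → Finset I → I} {W : Finset I}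
    (hstep : ∀ U : Finset I, ∀ j ∈ U, fav j U ∈ U)
    (hstep' : ∀ U : Finset I, ∀ j ∈ U, fav' j U ∈ U)
    (hind : FavInd fav W) (hind' : FavInd fav' W) {i : I}
    (hagree : ∀ j, j ≠ i → ∀ U : Finset I, fav' j U = fav j U) :
    ∀ S : Finset I, S ⊆ W → TTCaux fav' S i = TTCaux fav S i →
      ∀ x : I, TTCaux fav' S x = TTCaux fav S x := by
  have hagree' : ∀ j, j ≠ i → ∀ U : Finset I, fav j U = fav' j U :=
    fun j hj U => (hagree j hj U).symm
  intro S
  induction S using Finset.strongInduction with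
  | _ S ih =>
    intro hSW hsame x
    by_cases hiS : i ∈ S
    · have hA : (cyclicAgents fav S).Nonempty := cyclicAgents_nonempty (hstep S) ⟨i, hiS⟩
      have hA' : (cyclicAgents fav' S).Nonempty := cyclicAgents_nonempty (hstep' S) ⟨i, hiS⟩
      by_cases hiA' : i ∈ cyclicAgents fav' S
      · by_cases hiA : i ∈ cyclicAgents fav S
        · -- i trades now in both runs, with the same pointer
          have hpi : fav' i S = fav i S := by
            have h1 : TTCaux fav' S i = fav' i S := by
              rw [TTCaux_eq', if_pos hA', if_pos hiA']
            have h2 : TTCaux fav S i = fav i S := by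
              rw [TTCaux_eq', if_pos hA, if_pos hiA]
            rw [← h1, ← h2, hsame]
          have hagS : ∀ j ∈ S, fav j S = fav' j S := by
            intro j _
            by_cases hji : j = i
            · subst hji; exact hpi.symm
            · exact hagree' j hji S
          have hcyc : cyclicAgents fav S = cyclicAgents fav' S :=
            cyclicAgents_congr (hstep S) hagS
          rw [TTCaux_eq' fav' S x, TTCaux_eq' fav S x, ← hcyc, if_pos hA, if_pos hA]
          by_cases hx : x ∈ cyclicAgents fav S
          · rw [if_pos hx, if_pos hx]
            exact (hagS x (cyclicAgents_subset fav S hx)).symm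
          · rw [if_neg hx, if_neg hx]
            refine (TTCaux_congr hstep' _ ?_ x)
            intro j hj U _
            have hji : j ≠ i := by
              rintro rfl
              exact (Finset.mem_sdiff.mp hj).2 hiA
            exact hagree j hji U
        · -- i not yet fav-cyclic: fav-cycles are fav'-cycles; remove them first
          set A := cyclicAgents fav S with hAdef
          have hcomp := cyclic_compare hstep' hstep hagree' hiA
          have hD1 : A ⊆ cyclicAgents fav' S := fun y hy => (hcomp y hy).1
          have hD2 : ∀ y ∈ A, fav' y S ∈ A := by
            intro y hy
            rw [(hcomp y hy).2]
            exact cyclicAgents_closed (hstep S) hy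
          have hsplit := TTCaux_split hstep' hind' S hSW A hD1 hD2
          have hsame' : TTCaux fav' (S \ A) i = TTCaux fav (S \ A) i := by
            have h1 : TTCaux fav' (S \ A) i = TTCaux fav' S i := by
              rw [hsplit i, if_neg hiA]
            have h2 : TTCaux fav S i = TTCaux fav (S \ A) i := by
              rw [TTCaux_eq', if_pos hA, if_neg hiA]
            rw [h1, hsame, h2]
          rw [hsplit x, TTCaux_eq' fav S x, if_pos hA]
          by_cases hx : x ∈ A
          · rw [if_pos hx, if_pos hx]
            exact (hcomp x hx).2
          · rw [if_neg hx, if_neg hx]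
            exact ih (S \ A) (Finset.sdiff_ssubset (cyclicAgents_subset fav S) hA)
              (Finset.sdiff_subset.trans hSW) hsame' x
      · -- i not yet fav'-cyclic: fav'-cycles are fav-cycles; remove them first
        set A' := cyclicAgents fav' S with hA'def
        have hcomp := cyclic_compare hstep hstep' hagree hiA'
        have hD1 : A' ⊆ cyclicAgents fav S := fun y hy => (hcomp y hy).1
        have hD2 : ∀ y ∈ A', fav y S ∈ A' := by
          intro y hy
          rw [(hcomp y hy).2]
          exact cyclicAgents_closed (hstep' S) hy
        have hsplit := TTCaux_split hstep hind S hSW A' hD1 hD2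
        have hsame' : TTCaux fav' (S \ A') i = TTCaux fav (S \ A') i := by
          have h1 : TTCaux fav' S i = TTCaux fav' (S \ A') i := by
            rw [TTCaux_eq', if_pos hA', if_neg hiA']
          have h2 : TTCaux fav (S \ A') i = TTCaux fav S i := by
            rw [hsplit i, if_neg hiA']
          rw [← h1, hsame, ← h2]
        rw [hsplit x, TTCaux_eq' fav' S x, if_pos hA']
        by_cases hx : x ∈ A'
        · rw [if_pos hx, if_pos hx]
          exact ((hcomp x hx).2).symm
        · rw [if_neg hx, if_neg hx]
          exact ih (S \ A') (Finset.sdiff_ssubset (cyclicAgents_subset fav' S) hA')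
            (Finset.sdiff_subset.trans hSW) hsame' x
    · -- i not in the market: the two pointing maps agree on S
      refine TTCaux_congr hstep' S ?_ x
      intro j hj U _
      have hji : j ≠ i := by rintro rfl; exact hiS hj
      exact hagree j hji U

end NB
section Consist

variable {I : Type*} [DecidableEq I]

/-- **Consistency, TTC run level**: if no remaining agent outside `J` ever
receives an object of `J`, then the run restricted to `J` gives the agents of
`J` the same objects. -/
lemma TTCaux_consist {fav : I → Finset I → I} {W : Finset I}
    (hstep : ∀ U : Finset I, ∀ j ∈ U, fav j U ∈ U) (hind : FavInd fav W)
    (J : Finset I) :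
    ∀ S : Finset I, S ⊆ W → (∀ x ∈ S, x ∉ J → TTCaux fav S x ∉ J) →
      ∀ j ∈ S, j ∈ J → TTCaux fav (S ∩ J) j = TTCaux fav S j := by
  intro S
  induction S using Finset.strongInduction with
  | _ S ih =>
    intro hSW hinv j hjS hjJ
    set f := fun y => fav y S with hf
    have hA : (cyclicAgents fav S).Nonempty := cyclicAgents_nonempty (hstep S) ⟨j, hjS⟩
    set A := cyclicAgents fav S with hAdef
    -- Claim 1: the pointer of a cyclic J-agent stays in J
    have hcl : ∀ x ∈ A, x ∈ J → fav x S ∈ J := by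
      intro x hx hxJ
      by_contra hnot
      have hforward : ∀ m : ℕ, 1 ≤ m → f^[m] x ∉ J := by
        intro m hm
        induction m with
        | zero => omega
        | succ m ihm =>
          by_cases hm0 : m = 0
          · subst hm0; simpa using hnot
          · have hy := ihm (by omega)
            have hyA : f^[m] x ∈ A := iterate_mem_cyclicAgents (hstep S) hx m
            have := hinv (f^[m] x) (cyclicAgents_subset fav S hyA) hy
            rw [TTCaux_eq', if_pos hA, if_pos hyA] at this
            rw [Function.iterate_succ_apply']
            exact this
      obtain ⟨hxS, k, hk, hper⟩ := mem_cyclicAgents'.mp hx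
      exact hforward (k+1) (by omega) (by rw [show f^[k+1] x = x from hper]; exact hxJ)
    -- orbits of cyclic J-agents lie in A ∩ J
    have horbJ : ∀ x ∈ A, x ∈ J → ∀ n : ℕ, f^[n] x ∈ A ∧ f^[n] x ∈ J := by
      intro x hx hxJ n
      induction n with
      | zero => exact ⟨hx, hxJ⟩
      | succ n ihn =>
        rw [Function.iterate_succ_apply']
        exact ⟨cyclicAgents_closed (hstep S) ihn.1, hcl _ ihn.1 ihn.2⟩
    have htrans : ∀ x ∈ A, x ∈ J → x ∈ cyclicAgents fav (S ∩ J) ∧ fav x (S ∩ J) = fav x S := by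
      intro x hx hxJ
      refine orbit_transfer hstep hind hSW Finset.inter_subset_left hx ?_
      intro n
      exact Finset.mem_inter.mpr ⟨iterate_mem' (hstep S) (cyclicAgents_subset fav S hx) n,
        (horbJ x hx hxJ n).2⟩
    by_cases hjA : j ∈ A
    · obtain ⟨hmem, hptr⟩ := htrans j hjA hjJ
      rw [TTCaux_eq' fav (S ∩ J) j, if_pos ⟨j, hmem⟩, if_pos hmem, hptr,
        TTCaux_eq' fav S j, if_pos hA, if_pos hjA]
    · -- j not yet cyclic
      have hD1 : A ∩ J ⊆ cyclicAgents fav (S ∩ J) := by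
        intro y hy
        rw [Finset.mem_inter] at hy
        exact (htrans y hy.1 hy.2).1
      have hD2 : ∀ y ∈ A ∩ J, fav y (S ∩ J) ∈ A ∩ J := by
        intro y hy
        rw [Finset.mem_inter] at hy
        rw [(htrans y hy.1 hy.2).2]
        exact Finset.mem_inter.mpr ⟨cyclicAgents_closed (hstep S) hy.1, hcl y hy.1 hy.2⟩
      have hsplit := TTCaux_split hstep hind (S ∩ J)
        (Finset.inter_subset_left.trans hSW) (A ∩ J) hD1 hD2 j
      rw [hsplit, if_neg (fun h => hjA (Finset.mem_inter.mp h).1)]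
      have hset : (S ∩ J) \ (A ∩ J) = (S \ A) ∩ J := by
        ext y
        simp only [Finset.mem_sdiff, Finset.mem_inter]
        tauto
      rw [hset]
      have hinv' : ∀ x ∈ S \ A, x ∉ J → TTCaux fav (S \ A) x ∉ J := by
        intro x hx hxJ
        rw [Finset.mem_sdiff] at hx
        have := hinv x hx.1 hxJ
        rw [TTCaux_eq', if_pos hA, if_neg hx.2] at this
        exact this
      rw [ih (S \ A) (Finset.sdiff_ssubset (cyclicAgents_subset fav S) hA)
        (Finset.sdiff_subset.trans hSW) hinv' j (Finset.mem_sdiff.mpr ⟨hjS, hjA⟩) hjJ]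
      rw [TTCaux_eq' fav S j, if_pos hA, if_neg hjA]

end Consist
section Concrete

variable {I : Type*} [DecidableEq I]

lemma tieBreak_asymm (R : I → I → Prop) (t : LinearOrder I) :
    ∀ a b, tieBreak R t a b → tieBreak R t b a → False := by
  intro a b hab hba
  letI := t
  rcases hab with ⟨h1, h2⟩ | ⟨h1, h2, h3⟩ <;> rcases hba with ⟨g1, g2⟩ | ⟨g1, g2, g3⟩
  · exact h2 g1
  · exact h2 g1
  · exact g2 h1
  · exact absurd h3 (not_lt_of_gt g3)

lemma tieBreak_weak {R : I → I → Prop} {t : LinearOrder I} {a b : I}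
    (h : tieBreak R t a b) : R a b := by
  rcases h with ⟨h1, _⟩ | ⟨h1, _⟩ <;> exact h1

lemma tieBreak_trans {I' : Finset I} {i : I} {R : I → I → Prop}
    (h : IsWeakPrefOn I' i R) (t : LinearOrder I) :
    ∀ a b c, tieBreak R t a b → tieBreak R t b c → tieBreak R t a c := by
  obtain ⟨hsupp, hcompl, htrans, hstrict⟩ := h
  intro a b c hab hbc
  letI := t
  have hRab := tieBreak_weak hab
  have hRbc := tieBreak_weak hbc
  have hRac : R a c := htrans _ _ _ hRab hRbc
  by_cases hRca : R c a
  · have hRcb : R c b := htrans _ _ _ hRca hRab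
    have hRba : R b a := htrans _ _ _ hRbc hRca
    have h3 : t.lt b a := by
      rcases hab with ⟨_, h2⟩ | ⟨_, _, h3⟩
      · exact absurd hRba h2
      · exact h3
    have h4 : t.lt c b := by
      rcases hbc with ⟨_, h2⟩ | ⟨_, _, h3⟩
      · exact absurd hRcb h2
      · exact h3
    exact Or.inr ⟨hRac, hRca, lt_trans h4 h3⟩
  · exact Or.inl ⟨hRac, hRca⟩

lemma tieBreak_total {I' : Finset I} {i : I} {R : I → I → Prop}
    (h : IsWeakPrefOn I' i R) (t : LinearOrder I) :
    ∀ a ∈ I', ∀ b ∈ I', a ≠ b → tieBreak R t a b ∨ tieBreak R t b a := by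
  obtain ⟨hsupp, hcompl, htrans, hstrict⟩ := h
  intro a ha b hb hne
  letI := t
  rcases hcompl a ha b hb with hab | hba
  · by_cases hba : R b a
    · rcases lt_or_gt_of_ne (show b ≠ a from hne.symm) with hlt | hlt
      · exact Or.inl (Or.inr ⟨hab, hba, hlt⟩)
      · exact Or.inr (Or.inr ⟨hba, hab, hlt⟩)
    · exact Or.inl (Or.inl ⟨hab, hba⟩)
  · by_cases hab : R a b
    · rcases lt_or_gt_of_ne (show b ≠ a from hne.symm) with hlt | hlt
      · exact Or.inl (Or.inr ⟨hab, hba, hlt⟩)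
      · exact Or.inr (Or.inr ⟨hba, hab, hlt⟩)
    · exact Or.inr (Or.inl ⟨hba, hab⟩)

/-- Existence of a maximum of a nonempty finite set under a transitive relation
total on that set. -/
lemma exists_max {r : I → I → Prop} (htr : ∀ a b c, r a b → r b c → r a c) :
    ∀ U : Finset I, U.Nonempty → (∀ a ∈ U, ∀ b ∈ U, a ≠ b → r a b ∨ r b a) →
      ∃ m ∈ U, ∀ x ∈ U, x ≠ m → r m x := by
  intro U
  induction U using Finset.induction_on with
  | empty => rintro ⟨x, hx⟩; simp at hx
  | insert a U ha ih =>
    intro _ htot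
    by_cases hU : U.Nonempty
    · obtain ⟨m, hm, hmax⟩ := ih hU (fun x hx y hy => htot x (Finset.mem_insert_of_mem hx)
        y (Finset.mem_insert_of_mem hy))
      have hne : a ≠ m := fun h => ha (h ▸ hm)
      rcases htot a (Finset.mem_insert_self a U) m (Finset.mem_insert_of_mem hm) hne with
        ham | hma
      · refine ⟨a, Finset.mem_insert_self a U, ?_⟩
        intro x hx hxa
        rcases Finset.mem_insert.mp hx with rfl | hxU
        · exact absurd rfl hxa
        · by_cases hxm : x = m
          · subst hxm; exact ham
          · exact htr _ _ _ ham (hmax x hxU hxm)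
      · refine ⟨m, Finset.mem_insert_of_mem hm, ?_⟩
        intro x hx hxm
        rcases Finset.mem_insert.mp hx with rfl | hxU
        · exact hma
        · exact hmax x hxU hxm
    · rw [Finset.not_nonempty_iff_eq_empty] at hU
      subst hU
      refine ⟨a, Finset.mem_insert_self a ∅, ?_⟩
      intro x hx hxa
      rcases Finset.mem_insert.mp hx with rfl | hxU
      · exact absurd rfl hxa
      · simp at hxU

lemma bestIn_eq_of_max {r : I → I → Prop} {U : Finset I} {d m : I}
    (hasym : ∀ a b, r a b → r b a → False)
    (hm : m ∈ U) (hmax : ∀ x ∈ U, x ≠ m → r m x) : bestIn r U d = m := by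
  have hex : ∃ m' ∈ U, ∀ x ∈ U, x ≠ m' → r m' x := ⟨m, hm, hmax⟩
  unfold bestIn
  rw [dif_pos hex]
  obtain ⟨hc1, hc2⟩ := hex.choose_spec
  by_contra hne
  exact hasym _ _ (hc2 m hm (Ne.symm hne)) (hmax _ hc1 hne)

lemma bestIn_mem_or_default (r : I → I → Prop) (U : Finset I) (d : I) :
    bestIn r U d ∈ U ∨ bestIn r U d = d := by
  unfold bestIn
  by_cases hex : ∃ m ∈ U, ∀ x ∈ U, x ≠ m → r m x
  · rw [dif_pos hex]; exact Or.inl hex.choose_spec.1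
  · rw [dif_neg hex]; exact Or.inr rfl

lemma bestIn_spec {r : I → I → Prop} {U : Finset I} {d : I}
    (hex : ∃ m ∈ U, ∀ x ∈ U, x ≠ m → r m x) :
    bestIn r U d ∈ U ∧ ∀ x ∈ U, x ≠ bestIn r U d → r (bestIn r U d) x := by
  unfold bestIn
  rw [dif_pos hex]
  exact hex.choose_spec

lemma bestIn_congr {r r' : I → I → Prop} {U : Finset I} {d : I}
    (hasym : ∀ a b, r a b → r b a → False)
    (hag : ∀ a ∈ U, ∀ b ∈ U, r a b ↔ r' a b) : bestIn r U d = bestIn r' U d := by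
  by_cases hex : ∃ m ∈ U, ∀ x ∈ U, x ≠ m → r m x
  · have hex' : ∃ m ∈ U, ∀ x ∈ U, x ≠ m → r' m x := by
      obtain ⟨m, hm, hmax⟩ := hex
      exact ⟨m, hm, fun x hx hne => (hag m hm x hx).mp (hmax x hx hne)⟩
    have h1 := bestIn_spec (r := r') (d := d) hex'
    refine bestIn_eq_of_max (m := bestIn r' U d) hasym h1.1 ?_
    intro x hx hne
    exact (hag _ h1.1 x hx).mpr (h1.2 x hx hne)
  · have hex' : ¬ ∃ m ∈ U, ∀ x ∈ U, x ≠ m → r' m x := by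
      intro ⟨m, hm, hmax⟩
      exact hex ⟨m, hm, fun x hx hne => (hag m hm x hx).mpr (hmax x hx hne)⟩
    unfold bestIn
    rw [dif_neg hex, dif_neg hex']

end Concrete
section Instantiate

variable {I : Type*} [DecidableEq I]

lemma F_step (T : I → LinearOrder I) (R : I → I → I → Prop) :
    ∀ U : Finset I, ∀ j ∈ U, (fun (j : I) (S : Finset I) =>
      bestIn (tieBreak (R j) (T j)) S j) j U ∈ U := by
  intro U j hj
  rcases bestIn_mem_or_default (tieBreak (R j) (T j)) U j with h | h
  · exact h
  · simp only [h]; exact hj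

lemma F_ind (T : I → LinearOrder I) {I' : Finset I} {R : I → I → I → Prop}
    (hR : ∀ i ∈ I', IsWeakPrefOn I' i (R i)) :
    FavInd (fun (j : I) (S : Finset I) => bestIn (tieBreak (R j) (T j)) S j) I' := by
  intro j hj A B hAB hBW hmem
  simp only at hmem ⊢
  set r := tieBreak (R j) (T j) with hr
  have hasym := tieBreak_asymm (R j) (T j)
  have htr := tieBreak_trans (hR j hj) (T j)
  have hBne : B.Nonempty := ⟨_, hAB hmem⟩
  have hexB : ∃ m ∈ B, ∀ x ∈ B, x ≠ m → r m x :=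
    exists_max htr B hBne
      (fun a ha b hb => tieBreak_total (hR j hj) (T j) a (hBW ha) b (hBW hb))
  have hspecB := bestIn_spec (d := j) hexB
  refine bestIn_eq_of_max hasym hmem ?_
  intro x hx hne
  exact hspecB.2 x (hAB hx) hne

end Instantiate
/-- In the weak-preference variable-population housing market
model with the universal domain, for any profile of tie-breakers `▷`, the
mechanism `TTC^▷` satisfies local unanimity, consistency, strategy-proofness,
and non-bossiness. -/
theorem stmt_9 {I : Type*} [DecidableEq I] [Fintype I] (hn : 3 ≤ Fintype.card I)
    (T : I → LinearOrder I) :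
    LocallyUnanimousW (TTCtb T) ∧ ConsistentW (TTCtb T) ∧
      StrategyProofW (TTCtb T) ∧ NonBossyW (TTCtb T) := by
  refine ⟨?_, ?_, ?_, ?_⟩
  · -- Local unanimity
    intro I' hI' R hR J hJI' hJne μ hμ hbest i hiJ
    set F := fun (j : I) (S : Finset I) => bestIn (tieBreak (R j) (T j)) S j with hF
    have hstep := F_step T R
    have hFμ : ∀ j ∈ J, F j I' = μ j := by
      intro j hj
      have hμjJ : μ j ∈ J := Finset.mem_coe.mp (hμ.mapsTo (Finset.mem_coe.mpr hj))
      refine bestIn_eq_of_max (tieBreak_asymm _ _) (hJI' hμjJ) ?_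
      intro x hx hne
      obtain ⟨h1, h2⟩ := hbest j hj x hx hne
      exact Or.inl ⟨h1, h2⟩
    have hμJ : ∀ x ∈ J, μ x ∈ J :=
      fun x hx => Finset.mem_coe.mp (hμ.mapsTo (Finset.mem_coe.mpr hx))
    have hiter : ∀ n : ℕ, (fun j => F j I')^[n] i ∈ J ∧ (fun j => F j I')^[n] i = μ^[n] i := by
      intro n
      induction n with
      | zero => exact ⟨hiJ, rfl⟩
      | succ n ihn =>
        rw [Function.iterate_succ_apply', Function.iterate_succ_apply']
        constructor
        · show F _ I' ∈ J
          rw [hFμ _ ihn.1]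
          exact hμJ _ ihn.1
        · show F _ I' = _
          rw [hFμ _ ihn.1, ihn.2]
    have hcancel : ∀ n : ℕ, ∀ x ∈ J, ∀ y ∈ J, μ^[n] x = μ^[n] y → x = y := by
      intro n
      induction n with
      | zero => intro x _ y _ h; exact h
      | succ n ihn =>
        intro x hx y hy h
        rw [Function.iterate_succ_apply, Function.iterate_succ_apply] at h
        exact hμ.injOn (Finset.mem_coe.mpr hx) (Finset.mem_coe.mpr hy)
          (ihn (μ x) (hμJ x hx) (μ y) (hμJ y hy) h)
    obtain ⟨a, ha, b, hb, hne, heq⟩ :=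
      Finset.exists_ne_map_eq_of_card_lt_of_maps_to
        (s := Finset.range (J.card + 1)) (t := J) (by simp)
        (fun k _ => iterate_mem' hμJ hiJ k)
    have key : ∀ a b : ℕ, a < b → μ^[a] i = μ^[b] i → ∃ p, 0 < p ∧ μ^[p] i = i := by
      intro a b hab h
      refine ⟨b - a, by omega, ?_⟩
      have h2 : μ^[b] i = μ^[a] (μ^[b-a] i) := by
        rw [← Function.iterate_add_apply]
        congr 1
        omega
      rw [h2] at h
      exact (hcancel a i hiJ (μ^[b-a] i) (iterate_mem' hμJ hiJ _) h).symm
    have hper : ∃ p, 0 < p ∧ μ^[p] i = i := by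
      rcases Ne.lt_or_gt hne with h | h
      · exact key a b h heq
      · exact key b a h heq.symm
    obtain ⟨p, hp, hpper⟩ := hper
    have hicyc : i ∈ cyclicAgents F I' := by
      refine mem_cyclicAgents_of_period (hstep I') (hJI' hiJ) hp ?_
      rw [(hiter p).2]
      exact hpper
    show TTCaux F I' i = μ i
    rw [TTCaux_eq', if_pos ⟨i, hicyc⟩, if_pos hicyc]
    exact hFμ i hiJ
  · -- Consistency
    intro I' hI' R hR J hJI' hJne himg i hiJ
    set F := fun (j : I) (S : Finset I) => bestIn (tieBreak (R j) (T j)) S j with hF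
    set Fr := fun (j : I) (S : Finset I) => bestIn (tieBreak (restrW J (R j)) (T j)) S j with hFr
    have hstep := F_step T R
    have hstepr := F_step T (fun j => restrW J (R j))
    have hind := F_ind T hR
    have hinv : ∀ x ∈ I', x ∉ J → TTCaux F I' x ∉ J := by
      intro x hx hxJ
      have hxd : x ∈ I' \ J := Finset.mem_sdiff.mpr ⟨hx, hxJ⟩
      have hmem : TTCaux F I' x ∈ I' \ J := by
        rw [← himg]
        exact Finset.mem_image_of_mem _ hxd
      exact (Finset.mem_sdiff.mp hmem).2
    have hmain := TTCaux_consist hstep hind J I' (le_refl I') hinv i (hJI' hiJ) hiJ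
    rw [Finset.inter_eq_right.mpr hJI'] at hmain
    have hcongr : ∀ x : I, TTCaux Fr J x = TTCaux F J x := by
      refine TTCaux_congr hstepr J ?_
      intro j hj U hU
      refine bestIn_congr (tieBreak_asymm _ _) ?_
      intro x hx y hy
      have hxJ : x ∈ J := hU hx
      have hyJ : y ∈ J := hU hy
      simp only [tieBreak, restrW]
      constructor
      · rintro (⟨⟨h1, _⟩, h2⟩ | ⟨⟨h1, _⟩, ⟨h2, _⟩, h3⟩)
        · exact Or.inl ⟨h1, fun h => h2 ⟨h, hyJ, hxJ⟩⟩
        · exact Or.inr ⟨h1, h2, h3⟩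
      · rintro (⟨h1, h2⟩ | ⟨h1, h2, h3⟩)
        · exact Or.inl ⟨⟨h1, hxJ, hyJ⟩, fun h => h2 h.1⟩
        · exact Or.inr ⟨⟨h1, hxJ, hyJ⟩, ⟨h2, hyJ, hxJ⟩, h3⟩
    show TTCaux Fr J i = TTCaux F I' i
    rw [hcongr i]
    exact hmain
  · -- Strategy-proofness
    intro I' hI' R hR i hiI' R' hR'
    set F := fun (j : I) (S : Finset I) => bestIn (tieBreak (R j) (T j)) S j with hF
    set F' := fun (j : I) (S : Finset I) =>
      bestIn (tieBreak ((Function.update R i R') j) (T j)) S j with hF'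
    have hstep := F_step T R
    have hstep' := F_step T (Function.update R i R')
    have hind := F_ind T hR
    have hagree : ∀ j, j ≠ i → ∀ U : Finset I, F' j U = F j U := by
      intro j hj U
      show bestIn (tieBreak ((Function.update R i R') j) (T j)) U j = _
      rw [Function.update_of_ne hj]
    have hmax : ∀ S : Finset I, S ⊆ I' → ∀ x ∈ S, x ≠ F i S →
        tieBreak (R i) (T i) (F i S) x := by
      intro S hS x hx hne
      have hex := exists_max (tieBreak_trans (hR i hiI') (T i)) S ⟨x, hx⟩
        (fun a ha b hb => tieBreak_total (hR i hiI') (T i) a (hS ha) b (hS hb))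
      exact (bestIn_spec hex).2 x hx hne
    have hsp := TTCaux_sp hstep hstep' hind hagree (tieBreak (R i) (T i)) hmax
      I' (le_refl I') hiI'
    rintro ⟨h1, h2⟩
    have hbeq : TTCtb T I' (Function.update R i R') i = TTCaux F' I' i := rfl
    have haeq : TTCtb T I' R i = TTCaux F I' i := rfl
    rw [hbeq, haeq] at h1 h2
    rcases hsp with heq | hlt
    · apply h2
      rw [← heq] at h1 ⊢
      exact h1
    · exact h2 (tieBreak_weak hlt)
  · -- Non-bossiness
    intro I' hI' R hR i hiI' R' hR' hsame j hjI'
    set F := fun (j : I) (S : Finset I) => bestIn (tieBreak (R j) (T j)) S j with hF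
    set F' := fun (j : I) (S : Finset I) =>
      bestIn (tieBreak ((Function.update R i R') j) (T j)) S j with hF'
    have hstep := F_step T R
    have hstep' := F_step T (Function.update R i R')
    have hind := F_ind T hR
    have hupd : ∀ j ∈ I', IsWeakPrefOn I' j (Function.update R i R' j) := by
      intro j hj
      by_cases hji : j = i
      · subst hji
        rw [Function.update_self]
        exact hR'
      · rw [Function.update_of_ne hji]
        exact hR j hj
    have hind' := F_ind T hupd
    have hagree : ∀ j, j ≠ i → ∀ U : Finset I, F' j U = F j U := by
      intro j hj U
      show bestIn (tieBreak ((Function.update R i R') j) (T j)) U j = _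
      rw [Function.update_of_ne hj]
    have hsame' : TTCaux F' I' i = TTCaux F I' i := hsame
    exact TTCaux_nb hstep hstep' hind hind' hagree I' (le_refl I') hsame' j
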